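/- If a multiplication operator M_v : L^p(μ) → L^q(μ) with 1 < q < p < ∞ is bounded, then v ∈ L^r(μ) where 1/q = 1/p + 1/r, with ‖v‖_r controlled by the operator norm. -/

import Mathlib

open MeasureTheory Filter
open scoped NNReal ENNReal

/-- If `M_v : L^p → L^q` with `1 < q < p < ∞` is bounded with bound `C`,
then `v ∈ L^r(μ)` where `1/r = 1/q - 1/p`, with `‖v‖_r ≤ C`. -/
theorem mult_down_exponent_memLr
    {X : Type*} {mX : MeasurableSpace X} (μ : Measure X) [SigmaFinite μ]
    (p q r : ℝ) (hq : 1 < q) (hqp : q < p) (hr : 1 / r = 1 / q - 1 / p)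
    (v : X → ℝ) (hv : Measurable v)
    (C : ℝ≥0)
    (hbdd : ∀ f : X → ℝ, MemLp f (ENNReal.ofReal p) μ →
      eLpNorm (fun x => v x * f x) (ENNReal.ofReal q) μ ≤
        C * eLpNorm f (ENNReal.ofReal p) μ) :
    MemLp v (ENNReal.ofReal r) μ ∧ eLpNorm v (ENNReal.ofReal r) μ ≤ C := by
  have hq0 : 0 < q := lt_trans zero_lt_one hq
  have hp0 : 0 < p := lt_trans hq0 hqp
  have hr0 : 0 < r := by
    have h1 : 0 < 1 / r := by
      rw [hr]
      have := one_div_lt_one_div_of_lt hq0 hqp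
      linarith
    exact one_div_pos.mp h1
  -- exponent identities
  have hqr : q + r / p * q = r := by
    have hrne : r ≠ 0 := hr0.ne'
    have hqne : q ≠ 0 := hq0.ne'
    have hpne : p ≠ 0 := hp0.ne'
    field_simp at hr ⊢
    nlinarith [hr]
  have hrp : r / p * p = r := div_mul_cancel₀ r hp0.ne'
  -- the ℝ≥0∞-valued density |v|^r
  set g : X → ℝ≥0∞ := fun x => (‖v x‖₊ : ℝ≥0∞) ^ r with hg
  have hgmeas : Measurable g := hv.nnnorm.coe_nnreal_ennreal.pow_const r
  -- the truncation sets
  set E : ℕ → Set X := fun n => spanningSets μ n ∩ {x | |v x| ≤ (n : ℝ)} with hE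
  have hEmeas : ∀ n, MeasurableSet (E n) := fun n =>
    (measurableSet_spanningSets μ n).inter (measurableSet_le hv.abs measurable_const)
  have hEmono : Monotone E := by
    intro i j hij
    refine Set.inter_subset_inter (monotone_spanningSets μ hij) (fun x hx => ?_)
    simp only [Set.mem_setOf_eq] at hx ⊢
    exact le_trans hx (by exact_mod_cast hij)
  have hEunion : (⋃ n, E n) = Set.univ := by
    ext x
    simp only [Set.mem_iUnion, Set.mem_univ, iff_true]
    have hx : x ∈ ⋃ n, spanningSets μ n := by rw [iUnion_spanningSets]; trivial
    obtain ⟨m, hm⟩ := Set.mem_iUnion.mp hx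
    obtain ⟨k, hk⟩ := exists_nat_ge (|v x|)
    refine ⟨max m k, ⟨monotone_spanningSets μ (le_max_left m k) hm, ?_⟩⟩
    simp only [Set.mem_setOf_eq]
    calc |v x| ≤ (k : ℝ) := hk
      _ ≤ ((max m k : ℕ) : ℝ) := by exact_mod_cast le_max_right m k
  -- the key uniform bound
  have key : ∀ n, ∫⁻ x in E n, g x ∂μ ≤ (C : ℝ≥0∞) ^ r := by
    intro n
    set s := E n with hsdef
    have hs : MeasurableSet s := hEmeas n
    set a : ℝ≥0∞ := ∫⁻ x in s, g x ∂μ with ha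
    -- a is finite
    have ha_fin : a ≠ ∞ := by
      have hbound : ∀ x ∈ s, g x ≤ ((n : ℝ≥0∞)) ^ r := by
        intro x hx
        have hxle : |v x| ≤ (n : ℝ) := hx.2
        have : (‖v x‖₊ : ℝ≥0∞) ≤ (n : ℝ≥0∞) := by
          rw [← enorm_eq_nnnorm, ← ofReal_norm, Real.norm_eq_abs]
          calc ENNReal.ofReal (|v x|) ≤ ENNReal.ofReal (n : ℝ) :=
                ENNReal.ofReal_le_ofReal hxle
            _ = (n : ℝ≥0∞) := by simp
        exact ENNReal.rpow_le_rpow this hr0.le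
      have : a ≤ ((n : ℝ≥0∞)) ^ r * μ s := by
        calc a ≤ ∫⁻ _ in s, ((n : ℝ≥0∞)) ^ r ∂μ := setLIntegral_mono' hs hbound
          _ = ((n : ℝ≥0∞)) ^ r * μ s := by rw [setLIntegral_const]
      refine ne_of_lt (lt_of_le_of_lt this ?_)
      have h1 : ((n : ℝ≥0∞)) ^ r < ∞ :=
        ENNReal.rpow_lt_top_of_nonneg hr0.le (ENNReal.natCast_ne_top n)
      have h2 : μ s < ∞ :=
        lt_of_le_of_lt (measure_mono (Set.inter_subset_left)) (measure_spanningSets_lt_top μ n)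
      exact ENNReal.mul_lt_top h1 h2
    -- the test function
    set f : X → ℝ := s.indicator (fun x => |v x| ^ (r / p)) with hf
    have hfmeas : Measurable f :=
      (((Real.continuous_rpow_const (by positivity)).measurable).comp hv.abs).indicator hs
    -- pointwise identity for ‖f‖^p
    have hfp : ∀ x, ((‖f x‖₊ : ℝ≥0∞)) ^ p = s.indicator g x := by
      intro x
      by_cases hx : x ∈ s
      · rw [hf]
        simp only [Set.indicator_of_mem hx]
        rw [← enorm_eq_nnnorm, ← ofReal_norm, Real.norm_eq_abs,
          abs_of_nonneg (Real.rpow_nonneg (abs_nonneg _) _),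
          ENNReal.ofReal_rpow_of_nonneg (Real.rpow_nonneg (abs_nonneg _) _) hp0.le,
          ← Real.rpow_mul (abs_nonneg _), hrp, hg]
        simp only
        rw [← ENNReal.ofReal_rpow_of_nonneg (abs_nonneg _) hr0.le,
          ← Real.norm_eq_abs, ofReal_norm, enorm_eq_nnnorm]
      · rw [hf]
        simp only [Set.indicator_of_notMem hx, nnnorm_zero, ENNReal.coe_zero]
        rw [ENNReal.zero_rpow_of_pos hp0]
    -- pointwise identity for ‖v * f‖^q
    have hvfq : ∀ x, ((‖v x * f x‖₊ : ℝ≥0∞)) ^ q = s.indicator g x := by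
      intro x
      by_cases hx : x ∈ s
      · rw [hf]
        simp only [Set.indicator_of_mem hx]
        have hnn : (0:ℝ) ≤ |v x| ^ (r / p) := Real.rpow_nonneg (abs_nonneg _) _
        rw [← enorm_eq_nnnorm, ← ofReal_norm, Real.norm_eq_abs, abs_mul,
          abs_of_nonneg hnn, ENNReal.ofReal_mul (abs_nonneg _),
          ← ENNReal.ofReal_rpow_of_nonneg (abs_nonneg _) (by positivity : (0:ℝ) ≤ r / p),
          ENNReal.mul_rpow_of_nonneg _ _ hq0.le,
          ← ENNReal.rpow_mul,
          ← ENNReal.rpow_add_of_nonneg q (r / p * q) hq0.le (by positivity),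
          hqr, hg]
        simp only
        rw [← Real.norm_eq_abs, ofReal_norm, enorm_eq_nnnorm]
      · rw [hf]
        simp only [Set.indicator_of_notMem hx, mul_zero, nnnorm_zero, ENNReal.coe_zero]
        rw [ENNReal.zero_rpow_of_pos hq0]
    -- eLpNorm computations
    have hpne : ENNReal.ofReal p ≠ 0 := by
      simp [ENNReal.ofReal_eq_zero, not_le, hp0]
    have hptop : ENNReal.ofReal p ≠ ∞ := ENNReal.ofReal_ne_top
    have hqne : ENNReal.ofReal q ≠ 0 := by
      simp [ENNReal.ofReal_eq_zero, not_le, hq0]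
    have hqtop : ENNReal.ofReal q ≠ ∞ := ENNReal.ofReal_ne_top
    have hptr : (ENNReal.ofReal p).toReal = p := ENNReal.toReal_ofReal hp0.le
    have hqtr : (ENNReal.ofReal q).toReal = q := ENNReal.toReal_ofReal hq0.le
    have hfnorm : eLpNorm f (ENNReal.ofReal p) μ = a ^ (1 / p) := by
      rw [eLpNorm_eq_lintegral_rpow_enorm_toReal hpne hptop, hptr]
      congr 1
      rw [ha, ← lintegral_indicator hs]
      exact lintegral_congr hfp
    have hvfnorm : eLpNorm (fun x => v x * f x) (ENNReal.ofReal q) μ = a ^ (1 / q) := by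
      rw [eLpNorm_eq_lintegral_rpow_enorm_toReal hqne hqtop, hqtr]
      congr 1
      rw [ha, ← lintegral_indicator hs]
      exact lintegral_congr hvfq
    have hfmem : MemLp f (ENNReal.ofReal p) μ := by
      refine ⟨hfmeas.aestronglyMeasurable, ?_⟩
      rw [hfnorm]
      exact ENNReal.rpow_lt_top_of_nonneg (by positivity) ha_fin
    have hineq : a ^ (1 / q) ≤ C * a ^ (1 / p) := by
      rw [← hvfnorm, ← hfnorm]
      exact hbdd f hfmem
    -- deduce a ≤ C ^ r
    by_cases ha0 : a = 0
    · exact ha0.le.trans (zero_le)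
    · have hap_ne : a ^ (1 / p) ≠ 0 := by
        simp [ENNReal.rpow_eq_zero_iff, ha0, ha_fin]
      have hap_top : a ^ (1 / p) ≠ ∞ :=
        (ENNReal.rpow_lt_top_of_nonneg (by positivity) ha_fin).ne
      have hsplit : a ^ (1 / q) = a ^ (1 / r) * a ^ (1 / p) := by
        rw [← ENNReal.rpow_add_of_nonneg (1 / r) (1 / p) (by positivity) (by positivity)]
        congr 1
        rw [hr]; ring
      rw [hsplit] at hineq
      have hCle : a ^ (1 / r) ≤ (C : ℝ≥0∞) :=
        (ENNReal.mul_le_mul_iff_left hap_ne hap_top).mp hineq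
      have := ENNReal.rpow_le_rpow hCle hr0.le
      rwa [← ENNReal.rpow_mul, one_div_mul_cancel hr0.ne', ENNReal.rpow_one] at this
  -- pass to the limit via monotone convergence of measures
  have hT : ∫⁻ x, g x ∂μ ≤ (C : ℝ≥0∞) ^ r := by
    have hν : ∫⁻ x, g x ∂μ = ⨆ n, ∫⁻ x in E n, g x ∂μ := by
      have h1 : ∫⁻ x, g x ∂μ = (μ.withDensity g) Set.univ := by
        rw [withDensity_apply g MeasurableSet.univ, Measure.restrict_univ]
      have h2 : (μ.withDensity g) Set.univ = ⨆ n, (μ.withDensity g) (E n) := by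
        rw [← hEunion]
        exact hEmono.directed_le.measure_iUnion
      rw [h1, h2]
      exact iSup_congr fun n => withDensity_apply g (hEmeas n)
    rw [hν]
    exact iSup_le key
  -- conclude
  have hrne : ENNReal.ofReal r ≠ 0 := by
    simp [ENNReal.ofReal_eq_zero, not_le, hr0]
  have hrtop : ENNReal.ofReal r ≠ ∞ := ENNReal.ofReal_ne_top
  have hrtr : (ENNReal.ofReal r).toReal = r := ENNReal.toReal_ofReal hr0.le
  have hvnorm : eLpNorm v (ENNReal.ofReal r) μ = (∫⁻ x, g x ∂μ) ^ (1 / r) := by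
    rw [eLpNorm_eq_lintegral_rpow_enorm_toReal hrne hrtop, hrtr]
    rfl
  have hle : eLpNorm v (ENNReal.ofReal r) μ ≤ C := by
    rw [hvnorm]
    calc (∫⁻ x, g x ∂μ) ^ (1 / r) ≤ ((C : ℝ≥0∞) ^ r) ^ (1 / r) :=
          ENNReal.rpow_le_rpow hT (by positivity)
      _ = (C : ℝ≥0∞) := by
          rw [← ENNReal.rpow_mul, mul_one_div_cancel hr0.ne', ENNReal.rpow_one]
  exact ⟨⟨hv.aestronglyMeasurable, lt_of_le_of_lt hle ENNReal.coe_lt_top⟩, hle⟩
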